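/- For r > 1, ∫_{A_r} |z|⁴ / (t² + |z|⁴)² dL³(z,t) = 2π ln(r) ∫₀^π sin²(y) dy = π² ln(r), where A_r = {(z,t) ∈ ℂ × ℝ : 1 < (t² + |z|⁴)^{1/4} < r}. -/

import Mathlib

open Set Complex MeasureTheory

namespace Stmt15Aux

/-- The region in the `(u, t)` plane, with `u` playing the role of `|z|⁴`. -/
def Wset (r : ℝ) : Set (ℝ × ℝ) := {x | 1 < x.2 ^ 2 + x.1 ∧ x.2 ^ 2 + x.1 < r ^ 4}

/-- The integrand as a function of `(u, t)` with `u = |z|⁴`. -/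
noncomputable def hfun : ℝ × ℝ → ℝ := fun x => x.1 / (x.2 ^ 2 + x.1) ^ 2

noncomputable def Hfun (r u t : ℝ) : ℝ := (Wset r).indicator hfun (u, t)

noncomputable def Jfun (r u : ℝ) : ℝ := ∫ t : ℝ, Hfun r u t

lemma measurableSet_Wset (r : ℝ) : MeasurableSet (Wset r) := by
  have hc : Continuous fun x : ℝ × ℝ => x.2 ^ 2 + x.1 := by fun_prop
  exact ((isOpen_lt continuous_const hc).inter (isOpen_lt hc continuous_const)).measurableSet

lemma measurable_hfun : Measurable hfun := by
  apply Measurable.div <;> fun_prop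

lemma hfun_nonneg {x : ℝ × ℝ} (hx : 0 ≤ x.1) : 0 ≤ hfun x :=
  div_nonneg hx (sq_nonneg _)

lemma hfun_le_one {r : ℝ} {x : ℝ × ℝ} (hx0 : 0 ≤ x.1) (hx : x ∈ Wset r) : hfun x ≤ 1 := by
  obtain ⟨h1, _⟩ := hx
  have hd : (0:ℝ) < x.2 ^ 2 + x.1 := lt_trans one_pos h1
  rw [hfun, div_le_one (by positivity)]
  nlinarith [sq_nonneg x.2]

/-- Generic integrability: measurable, bounded by the indicator of a finite-measure set. -/
lemma integrable_of_bounded_support {α : Type*} [MeasureSpace α] {f : α → ℝ} {s : Set α}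
    (hf : Measurable f) (hs : MeasurableSet s) (hμ : volume s < ⊤)
    (hb : ∀ p, ‖f p‖ ≤ s.indicator (fun _ => (1 : ℝ)) p) : Integrable f := by
  refine Integrable.mono' ?_ hf.aestronglyMeasurable (ae_of_all _ hb)
  exact (integrableOn_const hμ.ne).integrable_indicator hs

lemma measurable_proj : Measurable (fun p : ℂ × ℝ => (‖p.1‖ ^ 4, p.2)) :=
  (((continuous_norm.comp continuous_fst).pow 4).prodMk continuous_snd).measurable

lemma measurable_proj2 : Measurable (fun q : ℝ × ℝ => (q.1 ^ 2, q.2)) := by fun_prop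

end Stmt15Aux

open Stmt15Aux
namespace Stmt15Aux
set_option maxHeartbeats 1000000 in
lemma step1 (r : ℝ) (hr : 1 < r) : (∫ p in {p : ℂ × ℝ | 1 < (p.2 ^ 2 + ‖p.1‖ ^ 4) ^ (1/4 : ℝ) ∧
      (p.2 ^ 2 + ‖p.1‖ ^ 4) ^ (1/4 : ℝ) < r},
    ‖p.1‖ ^ 4 / (p.2 ^ 2 + ‖p.1‖ ^ 4) ^ 2)
    = ∫ p : ℂ × ℝ, Hfun r (‖p.1‖ ^ 4) p.2 := by
  have hr0 : (0:ℝ) < r := lt_trans one_pos hr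
  have hπ := Real.pi_pos
  have hset : {p : ℂ × ℝ | 1 < (p.2 ^ 2 + ‖p.1‖ ^ 4) ^ (1/4 : ℝ) ∧
        (p.2 ^ 2 + ‖p.1‖ ^ 4) ^ (1/4 : ℝ) < r}
      = (fun p : ℂ × ℝ => (‖p.1‖ ^ 4, p.2)) ⁻¹' (Wset r) := by
    ext p
    simp only [mem_setOf_eq, mem_preimage, Wset]
    have hD0 : 0 ≤ p.2 ^ 2 + ‖p.1‖ ^ 4 := by positivity
    have h1 : (1 < (p.2 ^ 2 + ‖p.1‖ ^ 4) ^ (1/4:ℝ)) ↔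
        1 < p.2 ^ 2 + ‖p.1‖ ^ 4 := by
      rcases eq_or_lt_of_le hD0 with h | h
      · rw [← h, Real.zero_rpow (by norm_num : (1/4:ℝ) ≠ 0)]
      · rw [Real.one_lt_rpow_iff_of_pos h]
        norm_num
    have h2 : ((p.2 ^ 2 + ‖p.1‖ ^ 4) ^ (1/4:ℝ) < r) ↔
        p.2 ^ 2 + ‖p.1‖ ^ 4 < r ^ 4 := by
      have hr4 : ((r:ℝ) ^ 4) ^ (1/4:ℝ) = r := by
        rw [← Real.rpow_natCast r 4, ← Real.rpow_mul hr0.le]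
        norm_num
      conv_lhs => rw [← hr4]
      exact Real.rpow_lt_rpow_iff hD0 (by positivity) (by norm_num)
    rw [h1, h2]
  rw [hset, ← integral_indicator ((measurableSet_Wset r).preimage measurable_proj)]
  congr 1 with p
-- Integrability of the ambient integrand
set_option maxHeartbeats 1000000 in
lemma hint1 (r : ℝ) (hr : 1 < r) : Integrable (fun p : ℂ × ℝ => Hfun r (‖p.1‖ ^ 4) p.2) := by
  have hr0 : (0:ℝ) < r := lt_trans one_pos hr
  have hπ := Real.pi_pos
  set s : Set (ℂ × ℝ) := (fun p : ℂ × ℝ => (‖p.1‖ ^ 4, p.2)) ⁻¹' (Wset r)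
    with hs_def
  have hsm : MeasurableSet s := (measurableSet_Wset r).preimage measurable_proj
  have hsub : s ⊆ Metric.closedBall (0:ℂ) r ×ˢ Metric.closedBall (0:ℝ) (r ^ 2) := by
    rintro p ⟨h1, h2⟩
    simp only [Wset] at h1 h2
    constructor
    · simp only [Metric.mem_closedBall, Complex.dist_eq, sub_zero]
      by_contra hcon
      push_neg at hcon
      have := pow_lt_pow_left₀ hcon hr0.le (n := 4) (by norm_num)
      have h0 : (0:ℝ) ≤ ‖p.1‖ ^ 4 := by positivity
      nlinarith [sq_nonneg p.2]
    · simp only [Metric.mem_closedBall, Real.dist_eq, sub_zero]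
      by_contra hcon
      push_neg at hcon
      have h2' : (r ^ 2) ^ 2 < |p.2| ^ 2 :=
        pow_lt_pow_left₀ hcon (by positivity) (by norm_num)
      rw [_root_.sq_abs] at h2'
      have h0 : (0:ℝ) ≤ ‖p.1‖ ^ 4 := by positivity
      nlinarith
  have hvol : volume s < ⊤ := by
    refine lt_of_le_of_lt (measure_mono hsub) ?_
    rw [MeasureTheory.Measure.volume_eq_prod, Measure.prod_prod]
    exact ENNReal.mul_lt_top measure_closedBall_lt_top measure_closedBall_lt_top
  refine integrable_of_bounded_support ?_ hsm hvol ?_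
  · exact (measurable_hfun.indicator (measurableSet_Wset r)).comp measurable_proj
  · intro p
    by_cases hp : p ∈ s
    · rw [Set.indicator_of_mem hp]
      have hp' : (‖p.1‖ ^ 4, p.2) ∈ Wset r := hp
      have hv : Hfun r (‖p.1‖ ^ 4) p.2 = hfun (‖p.1‖ ^ 4, p.2) :=
        Set.indicator_of_mem hp' _
      rw [hv, Real.norm_eq_abs, _root_.abs_of_nonneg (hfun_nonneg (by positivity))]
      exact hfun_le_one (by positivity) hp
    · have hp' : (‖p.1‖ ^ 4, p.2) ∉ Wset r := hp
      have hv : Hfun r (‖p.1‖ ^ 4) p.2 = 0 := Set.indicator_of_notMem hp' _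
      rw [hv, Set.indicator_of_notMem hp]
      simp
-- Step 2: Fubini
set_option maxHeartbeats 1000000 in
lemma step2 (r : ℝ) (hr : 1 < r) : (∫ p : ℂ × ℝ, Hfun r (‖p.1‖ ^ 4) p.2)
    = ∫ z : ℂ, Jfun r (‖z‖ ^ 4) := by
  have hr0 : (0:ℝ) < r := lt_trans one_pos hr
  have hπ := Real.pi_pos
  rw [MeasureTheory.Measure.volume_eq_prod]
  exact integral_prod _ (by rw [← MeasureTheory.Measure.volume_eq_prod]; exact hint1 r hr)
-- Step 3: polar coordinates on ℂ
set_option maxHeartbeats 1000000 in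
lemma step3 (r : ℝ) (hr : 1 < r) : (∫ z : ℂ, Jfun r (‖z‖ ^ 4))
    = (∫ x in Ioi (0:ℝ), x * Jfun r (x ^ 4)) * (2 * Real.pi) := by
  have hr0 : (0:ℝ) < r := lt_trans one_pos hr
  have hπ := Real.pi_pos
  rw [← Complex.integral_comp_polarCoord_symm (fun z => Jfun r (‖z‖ ^ 4))]
  have hcongr : ∀ p ∈ polarCoord.target,
      p.1 • Jfun r (‖Complex.polarCoord.symm p‖ ^ 4)
        = (fun x => x * Jfun r (x ^ 4)) p.1 * (fun _ => (1:ℝ)) p.2 := by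
    intro p hp
    rw [polarCoord_target] at hp
    have hp1 : 0 < p.1 := hp.1
    rw [Complex.norm_polarCoord_symm, _root_.abs_of_pos hp1, smul_eq_mul]
    simp
  rw [setIntegral_congr_fun polarCoord.open_target.measurableSet hcongr]
  rw [polarCoord_target]
  have hsm := setIntegral_prod_mul (μ := (volume : Measure ℝ)) (ν := (volume : Measure ℝ))
    (fun x : ℝ => x * Jfun r (x ^ 4)) (fun _ : ℝ => (1:ℝ)) (Ioi 0)
    (Ioo (-Real.pi) Real.pi)
  rw [← MeasureTheory.Measure.volume_eq_prod] at hsm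
  rw [hsm]
  congr 1
  simp [Real.volume_Ioo]
  rw [max_eq_left (by positivity)]
  ring
-- Step 4: substitution x ↦ x²
set_option maxHeartbeats 1000000 in
lemma step4 (r : ℝ) (hr : 1 < r) : (∫ x in Ioi (0:ℝ), x * Jfun r (x ^ 4))
    = (1/2) * ∫ v in Ioi (0:ℝ), Jfun r (v ^ 2) := by
  have hr0 : (0:ℝ) < r := lt_trans one_pos hr
  have hπ := Real.pi_pos
  have key := MeasureTheory.integral_comp_rpow_Ioi_of_pos
    (g := fun v : ℝ => Jfun r (v ^ 2)) (p := 2) two_pos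
  have e : ∀ x : ℝ, (2 * x ^ ((2:ℝ) - 1)) • (fun v : ℝ => Jfun r (v ^ 2)) (x ^ (2:ℝ))
      = 2 * (x * Jfun r (x ^ 4)) := by
    intro x
    have h1 : x ^ ((2:ℝ) - 1) = x := by norm_num
    have h2 : (x ^ (2:ℝ)) = x ^ (2:ℕ) := by
      rw [show ((2:ℝ) = ((2:ℕ):ℝ)) by norm_num, Real.rpow_natCast]
    simp only [h1, h2, smul_eq_mul]
    rw [show ((x ^ (2:ℕ)) ^ 2 = x ^ 4) by ring]
    ring
  simp only [e] at key
  rw [integral_const_mul] at key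
  linarith
-- Integrability of the plane integrand
set_option maxHeartbeats 1000000 in
lemma hK (r : ℝ) (hr : 1 < r) : Integrable (fun q : ℝ × ℝ => {q : ℝ × ℝ | 0 < q.1}.indicator
    (fun q => Hfun r (q.1 ^ 2) q.2) q) := by
  have hr0 : (0:ℝ) < r := lt_trans one_pos hr
  have hπ := Real.pi_pos
  set B : Set (ℝ × ℝ) := {q : ℝ × ℝ | 0 < q.1} ∩
    ((fun q : ℝ × ℝ => (q.1 ^ 2, q.2)) ⁻¹' (Wset r)) with hB_def
  have hopen : MeasurableSet {q : ℝ × ℝ | 0 < q.1} :=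
    (isOpen_lt continuous_const continuous_fst).measurableSet
  have hBm : MeasurableSet B :=
    hopen.inter ((measurableSet_Wset r).preimage measurable_proj2)
  have hsub : B ⊆ Metric.closedBall (0:ℝ) (r ^ 2) ×ˢ Metric.closedBall (0:ℝ) (r ^ 2) := by
    rintro q ⟨hq1, hq2⟩
    obtain ⟨h1, h2⟩ := hq2
    simp only [Wset] at h1 h2
    have key : ∀ a : ℝ, a ^ 2 < r ^ 4 → |a| ≤ r ^ 2 := by
      intro a ha
      by_contra hcon
      push_neg at hcon
      have h2' : (r ^ 2) ^ 2 < |a| ^ 2 :=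
        pow_lt_pow_left₀ hcon (by positivity) (by norm_num)
      rw [_root_.sq_abs] at h2'
      nlinarith
    constructor
    · simp only [Metric.mem_closedBall, Real.dist_eq, sub_zero]
      exact key _ (by nlinarith [sq_nonneg q.2])
    · simp only [Metric.mem_closedBall, Real.dist_eq, sub_zero]
      exact key _ (by nlinarith [sq_nonneg q.1])
  have hvol : volume B < ⊤ := by
    refine lt_of_le_of_lt (measure_mono hsub) ?_
    rw [MeasureTheory.Measure.volume_eq_prod, Measure.prod_prod]
    exact ENNReal.mul_lt_top measure_closedBall_lt_top measure_closedBall_lt_top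
  refine integrable_of_bounded_support ?_ hBm hvol ?_
  · exact (((measurable_hfun.indicator (measurableSet_Wset r)).comp
      measurable_proj2)).indicator hopen
  · intro q
    by_cases hq1 : 0 < q.1
    · rw [Set.indicator_of_mem (show q ∈ {q : ℝ × ℝ | 0 < q.1} from hq1)]
      by_cases hq2 : (q.1 ^ 2, q.2) ∈ Wset r
      · have hqB : q ∈ B := ⟨hq1, hq2⟩
        rw [Set.indicator_of_mem hqB]
        have hv : Hfun r (q.1 ^ 2) q.2 = hfun (q.1 ^ 2, q.2) := Set.indicator_of_mem hq2 _
        rw [hv, Real.norm_eq_abs, _root_.abs_of_nonneg (hfun_nonneg (by positivity))]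
        exact hfun_le_one (by positivity) hq2
      · have hv : Hfun r (q.1 ^ 2) q.2 = 0 := Set.indicator_of_notMem hq2 _
        rw [hv]
        simp [Set.indicator_nonneg]
    · rw [Set.indicator_of_notMem (show q ∉ {q : ℝ × ℝ | 0 < q.1} from hq1)]
      simp [Set.indicator_nonneg]
-- Step 5: back to a plane integral
set_option maxHeartbeats 1000000 in
lemma step5 (r : ℝ) (hr : 1 < r) : (∫ v in Ioi (0:ℝ), Jfun r (v ^ 2))
    = ∫ q : ℝ × ℝ, {q : ℝ × ℝ | 0 < q.1}.indicator
        (fun q => Hfun r (q.1 ^ 2) q.2) q := by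
  have hr0 : (0:ℝ) < r := lt_trans one_pos hr
  have hπ := Real.pi_pos
  rw [← integral_indicator measurableSet_Ioi, MeasureTheory.Measure.volume_eq_prod,
    integral_prod _ (by rw [← MeasureTheory.Measure.volume_eq_prod]; exact hK r hr)]
  congr 1 with v
  by_cases hv : 0 < v
  · rw [Set.indicator_of_mem (show v ∈ Ioi 0 from hv)]
    have : ∀ t : ℝ, ({q : ℝ × ℝ | 0 < q.1}.indicator
        (fun q => Hfun r (q.1 ^ 2) q.2) (v, t)) = Hfun r (v ^ 2) t := by
      intro t
      exact Set.indicator_of_mem (show (v,t) ∈ {q : ℝ × ℝ | 0 < q.1} from hv) _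
    simp only [this]
    rfl
  · rw [Set.indicator_of_notMem (show v ∉ Ioi 0 from hv)]
    have : ∀ t : ℝ, ({q : ℝ × ℝ | 0 < q.1}.indicator
        (fun q => Hfun r (q.1 ^ 2) q.2) (v, t)) = 0 := by
      intro t
      exact Set.indicator_of_notMem (show (v,t) ∉ {q : ℝ × ℝ | 0 < q.1} from hv) _
    simp only [this, integral_zero]
-- Step 6: polar coordinates on the plane
set_option maxHeartbeats 1000000 in
lemma step6 (r : ℝ) (hr : 1 < r) : (∫ q : ℝ × ℝ, {q : ℝ × ℝ | 0 < q.1}.indicator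
        (fun q => Hfun r (q.1 ^ 2) q.2) q)
    = (2 * Real.log r) * (Real.pi / 2) := by
  have hr0 : (0:ℝ) < r := lt_trans one_pos hr
  have hπ := Real.pi_pos
  set K : ℝ × ℝ → ℝ := fun q => {q : ℝ × ℝ | 0 < q.1}.indicator
    (fun q => Hfun r (q.1 ^ 2) q.2) q with hK_def
  set F₁ : ℝ → ℝ := (Ioo (1:ℝ) (r ^ 2)).indicator (fun x => x⁻¹) with hF1_def
  set F₂ : ℝ → ℝ := (Ioo (-(Real.pi/2)) (Real.pi/2)).indicator (fun y => Real.cos y ^ 2)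
    with hF2_def
  rw [← integral_comp_polarCoord_symm K]
  have hcongr : ∀ p ∈ polarCoord.target,
      p.1 • K (polarCoord.symm p) = F₁ p.1 * F₂ p.2 := by
    intro p hp
    rw [polarCoord_target] at hp
    have hp1 : 0 < p.1 := hp.1
    have hp2a : -Real.pi < p.2 := hp.2.1
    have hp2b : p.2 < Real.pi := hp.2.2
    rw [polarCoord_symm_apply]
    by_cases hc : 0 < Real.cos p.2
    · have hq1 : 0 < p.1 * Real.cos p.2 := mul_pos hp1 hc
      have hKval : K (p.1 * Real.cos p.2, p.1 * Real.sin p.2)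
          = (Wset r).indicator hfun ((p.1 * Real.cos p.2) ^ 2, p.1 * Real.sin p.2) :=
        Set.indicator_of_mem (show _ ∈ {q : ℝ × ℝ | 0 < q.1} from hq1) _
      have hsum : (p.1 * Real.sin p.2) ^ 2 + (p.1 * Real.cos p.2) ^ 2 = p.1 ^ 2 := by
        nlinarith [Real.sin_sq_add_cos_sq p.2]
      have hθmem : p.2 ∈ Ioo (-(Real.pi/2)) (Real.pi/2) := by
        constructor
        · by_contra hθ
          push_neg at hθ
          have h1 : Real.pi / 2 ≤ -p.2 := by linarith
          have h2 : -p.2 ≤ Real.pi + Real.pi / 2 := by linarith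
          have := Real.cos_nonpos_of_pi_div_two_le_of_le h1 h2
          rw [Real.cos_neg] at this
          linarith
        · by_contra hθ
          push_neg at hθ
          have := Real.cos_nonpos_of_pi_div_two_le_of_le hθ (by linarith)
          linarith
      by_cases hρ : 1 < p.1 ^ 2 ∧ p.1 ^ 2 < r ^ 4
      · have hmemW : ((p.1 * Real.cos p.2) ^ 2, p.1 * Real.sin p.2) ∈ Wset r := by
          constructor <;> simp only [] <;> rw [hsum] <;> [exact hρ.1; exact hρ.2]
        rw [hKval, Set.indicator_of_mem hmemW]
        have hρmem : p.1 ∈ Ioo (1:ℝ) (r ^ 2) := by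
          constructor
          · nlinarith [hρ.1]
          · nlinarith [hρ.2, sq_nonneg (p.1 + r ^ 2), sq_nonneg r]
        rw [hF1_def, hF2_def, Set.indicator_of_mem hρmem, Set.indicator_of_mem hθmem]
        show p.1 * hfun _ = _
        rw [hfun]
        simp only []
        rw [hsum]
        have h10 : p.1 ≠ 0 := ne_of_gt hp1
        field_simp
      · have hnotW : ((p.1 * Real.cos p.2) ^ 2, p.1 * Real.sin p.2) ∉ Wset r := by
          intro hmem
          obtain ⟨h1, h2⟩ := hmem
          simp only [] at h1 h2
          rw [hsum] at h1 h2
          exact hρ ⟨h1, h2⟩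
        rw [hKval, Set.indicator_of_notMem hnotW]
        have hρnot : p.1 ∉ Ioo (1:ℝ) (r ^ 2) := by
          intro hmem
          refine hρ ⟨?_, ?_⟩
          · nlinarith [hmem.1]
          · nlinarith [hmem.1, hmem.2]
        rw [hF1_def, Set.indicator_of_notMem hρnot]
        simp
    · have hq1 : ¬ 0 < p.1 * Real.cos p.2 := by
        push_neg at hc ⊢
        exact mul_nonpos_of_nonneg_of_nonpos hp1.le hc
      have hKval : K (p.1 * Real.cos p.2, p.1 * Real.sin p.2) = 0 :=
        Set.indicator_of_notMem (show _ ∉ {q : ℝ × ℝ | 0 < q.1} from hq1) _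
      have hθnot : p.2 ∉ Ioo (-(Real.pi/2)) (Real.pi/2) := by
        intro hmem
        exact hc (Real.cos_pos_of_mem_Ioo hmem)
      rw [hKval, hF2_def, Set.indicator_of_notMem hθnot]
      simp
  rw [setIntegral_congr_fun polarCoord.open_target.measurableSet hcongr, polarCoord_target]
  have hsm := setIntegral_prod_mul (μ := (volume : Measure ℝ)) (ν := (volume : Measure ℝ))
    F₁ F₂ (Ioi 0) (Ioo (-Real.pi) Real.pi)
  rw [← MeasureTheory.Measure.volume_eq_prod] at hsm
  rw [hsm]
  have hI1 : (∫ x in Ioi (0:ℝ), F₁ x) = 2 * Real.log r := by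
    rw [hF1_def, setIntegral_indicator measurableSet_Ioo,
      inter_eq_self_of_subset_right
        (show Ioo (1:ℝ) (r^2) ⊆ Ioi 0 from fun x hx => lt_trans one_pos hx.1),
      ← MeasureTheory.integral_Ioc_eq_integral_Ioo,
      ← intervalIntegral.integral_of_le (by nlinarith : (1:ℝ) ≤ r ^ 2),
      integral_inv (by
        intro h
        rw [mem_uIcc] at h
        rcases h with ⟨h1, _⟩ | ⟨_, h2⟩ <;> nlinarith)]
    rw [div_one, Real.log_pow]
    norm_num
  have hI2 : (∫ y in Ioo (-Real.pi) Real.pi, F₂ y) = Real.pi / 2 := by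
    rw [hF2_def, setIntegral_indicator measurableSet_Ioo,
      inter_eq_self_of_subset_right
        (show Ioo (-(Real.pi/2)) (Real.pi/2) ⊆ Ioo (-Real.pi) Real.pi from
          fun y hy => ⟨by linarith [hy.1], by linarith [hy.2]⟩),
      ← MeasureTheory.integral_Ioc_eq_integral_Ioo,
      ← intervalIntegral.integral_of_le (by linarith : -(Real.pi/2) ≤ Real.pi/2),
      integral_cos_sq]
    norm_num [Real.cos_pi_div_two, Real.cos_neg]
  rw [hI1, hI2]
end Stmt15Aux

set_option maxHeartbeats 1000000 in
/-- The integral arising in the modulus of the foliation of the Korányi annulus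
`A_r = {1 < (t²+|z|⁴)^{1/4} < r}` by radial curves:
`∫_{A_r} |z|⁴/(t²+|z|⁴)² dL³ = 2π ln(r) ∫₀^π sin²(y) dy = π² ln(r)`. -/
theorem stmt15 (r : ℝ) (hr : 1 < r) :
    (∫ p in {p : ℂ × ℝ | 1 < (p.2 ^ 2 + ‖p.1‖ ^ 4) ^ (1/4 : ℝ) ∧
        (p.2 ^ 2 + ‖p.1‖ ^ 4) ^ (1/4 : ℝ) < r},
      ‖p.1‖ ^ 4 / (p.2 ^ 2 + ‖p.1‖ ^ 4) ^ 2)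
      = 2 * Real.pi * Real.log r * ∫ y in (0:ℝ)..Real.pi, Real.sin y ^ 2 ∧
    (∫ p in {p : ℂ × ℝ | 1 < (p.2 ^ 2 + ‖p.1‖ ^ 4) ^ (1/4 : ℝ) ∧
        (p.2 ^ 2 + ‖p.1‖ ^ 4) ^ (1/4 : ℝ) < r},
      ‖p.1‖ ^ 4 / (p.2 ^ 2 + ‖p.1‖ ^ 4) ^ 2)
      = Real.pi ^ 2 * Real.log r := by
  have hr0 : (0:ℝ) < r := lt_trans one_pos hr
  have hπ := Real.pi_pos
  -- The main computation
  have main : (∫ p in {p : ℂ × ℝ | 1 < (p.2 ^ 2 + ‖p.1‖ ^ 4) ^ (1/4 : ℝ) ∧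
        (p.2 ^ 2 + ‖p.1‖ ^ 4) ^ (1/4 : ℝ) < r},
      ‖p.1‖ ^ 4 / (p.2 ^ 2 + ‖p.1‖ ^ 4) ^ 2)
      = Real.pi ^ 2 * Real.log r := by
    -- Step 1: rewrite the set and the integral as a full-space integral of `Hfun`
    rw [step1 r hr, step2 r hr, step3 r hr, step4 r hr, step5 r hr, step6 r hr]
    ring
  constructor
  · rw [main, integral_sin_sq]
    simp [Real.sin_pi]
    ring
  · exact main
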